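/- Let K be a field of characteristic 0 and consider the polynomial ring K[X₁₂, X₁₄, X₁₅, X₁₆, X₁₇, X₁₈, X₂₄, X₂₅, X₂₆, X₂₇, X₃₄, X₃₅, X₃₆]. Then the polynomial X₁₂·X₁₇·X₁₈·X₃₄² belongs to the ideal generated by the six Jacobi polynomials J₁₂₄ = X₁₂X₃₄ − X₂₄X₁₆ + X₁₄X₂₅, J₁₂₅ = X₁₂X₃₅ − X₂₅X₁₇ + X₁₅X₂₆, J₁₂₆ = X₁₂X₃₆ − X₂₆X₁₈ + X₁₆X₂₇, J₁₃₄ = −X₃₄X₁₇ + X₁₄X₃₅, J₁₃₅ = −X₃₅X₁₈ + X₁₅X₃₆, J₂₃₄ = −X₃₄X₂₇ + X₂₄X₃₆. (Since these six polynomials are among the generators of the defining ideal J_n of the scheme 𝔏_n^T for n ≥ 9, the class of X₁₂X₁₇X₁₈X₃₄ in K[X_{ij}]/J_n has vanishing square.) -/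
import Mathlib


open MvPolynomial

/-- Variables (indexed by `Fin 13`):
`X 0 = X₁₂, X 1 = X₁₄, X 2 = X₁₅, X 3 = X₁₆, X 4 = X₁₇, X 5 = X₁₈,`
`X 6 = X₂₄, X 7 = X₂₅, X 8 = X₂₆, X 9 = X₂₇, X 10 = X₃₄, X 11 = X₃₅, X 12 = X₃₆`.
The polynomial `X₁₂·X₁₇·X₁₈·X₃₄²` belongs to the ideal generated by the six Jacobi
polynomials `J₁₂₄, J₁₂₅, J₁₂₆, J₁₃₄, J₁₃₅, J₂₃₄`. -/
theorem stmt_18 (K : Type) [Field K] [CharZero K] :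
    (X 0 * X 4 * X 5 * (X 10) ^ 2 : MvPolynomial (Fin 13) K) ∈
      Ideal.span ({
        X 0 * X 10 - X 6 * X 3 + X 1 * X 7,     -- J₁₂₄ = X₁₂X₃₄ − X₂₄X₁₆ + X₁₄X₂₅
        X 0 * X 11 - X 7 * X 4 + X 2 * X 8,     -- J₁₂₅ = X₁₂X₃₅ − X₂₅X₁₇ + X₁₅X₂₆
        X 0 * X 12 - X 8 * X 5 + X 3 * X 9,     -- J₁₂₆ = X₁₂X₃₆ − X₂₆X₁₈ + X₁₆X₂₇
        -(X 10) * X 4 + X 1 * X 11,             -- J₁₃₄ = −X₃₄X₁₇ + X₁₄X₃₅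
        -(X 11) * X 5 + X 2 * X 12,             -- J₁₃₅ = −X₃₅X₁₈ + X₁₅X₃₆
        -(X 10) * X 9 + X 6 * X 12} :           -- J₂₃₄ = −X₃₄X₂₇ + X₂₄X₃₆
        Set (MvPolynomial (Fin 13) K)) := by
  set g1 : MvPolynomial (Fin 13) K := X 0 * X 10 - X 6 * X 3 + X 1 * X 7 with hg1
  set g2 : MvPolynomial (Fin 13) K := X 0 * X 11 - X 7 * X 4 + X 2 * X 8 with hg2
  set g3 : MvPolynomial (Fin 13) K := X 0 * X 12 - X 8 * X 5 + X 3 * X 9 with hg3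
  set g4 : MvPolynomial (Fin 13) K := -(X 10) * X 4 + X 1 * X 11 with hg4
  set g5 : MvPolynomial (Fin 13) K := -(X 11) * X 5 + X 2 * X 12 with hg5
  set g6 : MvPolynomial (Fin 13) K := -(X 10) * X 9 + X 6 * X 12 with hg6
  have m1 : g1 ∈ Ideal.span ({g1, g2, g3, g4, g5, g6} : Set (MvPolynomial (Fin 13) K)) :=
    Ideal.subset_span (by simp)
  have m2 : g2 ∈ Ideal.span ({g1, g2, g3, g4, g5, g6} : Set (MvPolynomial (Fin 13) K)) :=
    Ideal.subset_span (by simp)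
  have m3 : g3 ∈ Ideal.span ({g1, g2, g3, g4, g5, g6} : Set (MvPolynomial (Fin 13) K)) :=
    Ideal.subset_span (by simp)
  have m4 : g4 ∈ Ideal.span ({g1, g2, g3, g4, g5, g6} : Set (MvPolynomial (Fin 13) K)) :=
    Ideal.subset_span (by simp)
  have m5 : g5 ∈ Ideal.span ({g1, g2, g3, g4, g5, g6} : Set (MvPolynomial (Fin 13) K)) :=
    Ideal.subset_span (by simp)
  have m6 : g6 ∈ Ideal.span ({g1, g2, g3, g4, g5, g6} : Set (MvPolynomial (Fin 13) K)) :=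
    Ideal.subset_span (by simp)
  have hcombo :
      (2 * X 4 * X 5 * X 10 - X 1 * X 2 * X 12) * g1 + (X 1 * X 5 * X 10) * g2 +
          (X 1 * X 2 * X 10) * g3 +
          (X 1 * X 5 * X 7 - 2 * X 3 * X 5 * X 6 - X 0 * X 5 * X 10) * g4 +
          (X 1 * X 1 * X 7 - 2 * X 1 * X 3 * X 6) * g5 + (X 1 * X 2 * X 3) * g6 ∈
        Ideal.span ({g1, g2, g3, g4, g5, g6} : Set (MvPolynomial (Fin 13) K)) := by
    exact Ideal.add_mem _ (Ideal.add_mem _ (Ideal.add_mem _ (Ideal.add_mem _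
      (Ideal.add_mem _ (Ideal.mul_mem_left _ _ m1) (Ideal.mul_mem_left _ _ m2))
      (Ideal.mul_mem_left _ _ m3)) (Ideal.mul_mem_left _ _ m4))
      (Ideal.mul_mem_left _ _ m5)) (Ideal.mul_mem_left _ _ m6)
  have key : (X 0 * X 4 * X 5 * (X 10) ^ 2 : MvPolynomial (Fin 13) K) =
      C ((3 : K)⁻¹) *
        ((2 * X 4 * X 5 * X 10 - X 1 * X 2 * X 12) * g1 + (X 1 * X 5 * X 10) * g2 +
          (X 1 * X 2 * X 10) * g3 +
          (X 1 * X 5 * X 7 - 2 * X 3 * X 5 * X 6 - X 0 * X 5 * X 10) * g4 +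
          (X 1 * X 1 * X 7 - 2 * X 1 * X 3 * X 6) * g5 + (X 1 * X 2 * X 3) * g6) := by
    have h3 : (C (3 : K) : MvPolynomial (Fin 13) K) *
        (X 0 * X 4 * X 5 * (X 10) ^ 2) =
        (2 * X 4 * X 5 * X 10 - X 1 * X 2 * X 12) * g1 + (X 1 * X 5 * X 10) * g2 +
          (X 1 * X 2 * X 10) * g3 +
          (X 1 * X 5 * X 7 - 2 * X 3 * X 5 * X 6 - X 0 * X 5 * X 10) * g4 +
          (X 1 * X 1 * X 7 - 2 * X 1 * X 3 * X 6) * g5 + (X 1 * X 2 * X 3) * g6 := by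
      rw [hg1, hg2, hg3, hg4, hg5, hg6]
      rw [show (C (3 : K) : MvPolynomial (Fin 13) K) = 3 by
        simp [map_ofNat]]
      ring
    rw [← h3, ← mul_assoc, ← C_mul, inv_mul_cancel₀ (by norm_num : (3 : K) ≠ 0), C_1,
      one_mul]
  rw [key]
  exact Ideal.mul_mem_left _ _ hcombo
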